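/- Consistency characterization for periodic patterns: let p have period q, and suppose p matches text t at positions k and l with k < l ≤ k + m/2. Then p matches t at every position k + rq for integers r ≥ 0 with k + rq ≤ l. -/
import Mathlib


def Matches {α : Type*} {m : ℕ} (p : Fin m → α) (t : ℕ → α) (i : ℕ) : Prop :=
  ∀ j : Fin m, t (i + (j : ℕ)) = p j

section Aux

variable {α : Type*} {m : ℕ}

def IsPer (p : Fin m → α) (r : ℕ) : Prop :=
  ∀ i (hi : i < m), r ≤ i → p ⟨i, hi⟩ = p ⟨i - r, by omega⟩

lemma pcongr (p : Fin m → α) {i j : ℕ} (hi : i < m) (hj : j < m) (h : i = j) :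
    p ⟨i, hi⟩ = p ⟨j, hj⟩ := by subst h; rfl

lemma sub_per (p : Fin m → α) {a b : ℕ} (hb : 1 ≤ b) (hba : b < a) (ham : a + b ≤ m)
    (ha : IsPer p a) (hbp : IsPer p b) : IsPer p (a - b) := by
  intro i hi hge
  by_cases h : a ≤ i
  · have h1 := ha i hi h
    have h2 := hbp (i - a + b) (by omega) (by omega)
    rw [h1]
    calc p ⟨i - a, _⟩ = p ⟨i - a + b - b, by omega⟩ := pcongr p _ _ (by omega)
      _ = p ⟨i - a + b, by omega⟩ := h2.symm
      _ = p ⟨i - (a - b), by omega⟩ := pcongr p _ _ (by omega)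
  · have h1 := hbp (i + b) (by omega) (by omega)
    have h2 := ha (i + b) (by omega) (by omega)
    calc p ⟨i, hi⟩ = p ⟨i + b - b, by omega⟩ := pcongr p _ _ (by omega)
      _ = p ⟨i + b, by omega⟩ := h1.symm
      _ = p ⟨i + b - a, by omega⟩ := h2
      _ = p ⟨i - (a - b), by omega⟩ := pcongr p _ _ (by omega)

lemma gcd_per (p : Fin m → α) : ∀ n a b, a + b ≤ n → 1 ≤ a → 1 ≤ b → a + b ≤ m →
    IsPer p a → IsPer p b → IsPer p (Nat.gcd a b) := by
  intro n
  induction n with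
  | zero => intro a b h ha hb; omega
  | succ n ih =>
    intro a b hn ha hb hm hpa hpb
    rcases lt_trichotomy a b with h | h | h
    · have hsub : IsPer p (b - a) := sub_per p ha h (by omega) hpb hpa
      have := ih a (b - a) (by omega) ha (by omega) (by omega) hpa hsub
      rwa [Nat.gcd_sub_self_right (by omega)] at this
    · subst h
      rwa [Nat.gcd_self]
    · have hsub : IsPer p (a - b) := sub_per p hb h (by omega) hpa hpb
      have := ih (a - b) b (by omega) (by omega) hb (by omega) hsub hpb
      rwa [Nat.gcd_sub_self_left (by omega)] at this

lemma iter_per (p : Fin m → α) {q : ℕ} (hq : IsPer p q) :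
    ∀ c j (h : j + c * q < m), p ⟨j + c * q, h⟩ = p ⟨j, by omega⟩ := by
  intro c
  induction c with
  | zero => intro j h; exact pcongr p _ _ (by omega)
  | succ c ih =>
    intro j h
    have e : j + (c + 1) * q = j + c * q + q := by ring
    have h' : j + c * q + q < m := by omega
    calc p ⟨j + (c + 1) * q, h⟩ = p ⟨j + c * q + q, h'⟩ := pcongr p _ _ e
      _ = p ⟨j + c * q + q - q, by omega⟩ := hq _ h' (by omega)
      _ = p ⟨j + c * q, by omega⟩ := pcongr p _ _ (by omega)
      _ = p ⟨j, by omega⟩ := ih j (by omega)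

end Aux

/-- Consistency of a periodic pattern between two nearby occurrences: if `p` has
least period `q ≤ m/2` and matches the text at positions `k` and `l` with
`k < l ≤ k + m/2`, then `p` matches at every position `k + r·q ≤ l`. -/
theorem periodic_intermediate_occurrences {α : Type*} {m : ℕ} (p : Fin m → α)
    (q : ℕ) (hq1 : 1 ≤ q) (hq2 : q ≤ m / 2)
    (hper : ∀ i, ∀ hi : i < m, q ≤ i → ∀ h : i - q < m, p ⟨i, hi⟩ = p ⟨i - q, h⟩)
    (hleast : ∀ d, 1 ≤ d → d < q →
      ∃ i, ∃ hi : i < m, d ≤ i ∧ p ⟨i, hi⟩ ≠ p ⟨i - d, by omega⟩)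
    (t : ℕ → α) (k l : ℕ) (hk : Matches p t k) (hl : Matches p t l)
    (hkl : k < l) (hclose : l ≤ k + m / 2) :
    ∀ r : ℕ, k + r * q ≤ l → Matches p t (k + r * q) := by
  set d := l - k with hd
  have hld : l = k + d := by omega
  have hdm : d ≤ m / 2 := by omega
  have hqd : q + d ≤ m := by omega
  have hpq : IsPer p q := fun i hi h => hper i hi h (by omega)
  have hpd : IsPer p d := by
    intro i hi hge
    have h1 : t (k + i) = p ⟨i, hi⟩ := hk ⟨i, hi⟩
    have h2 : t (l + (i - d)) = p ⟨i - d, by omega⟩ := hl ⟨i - d, by omega⟩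
    rw [← h1]
    have e : k + i = l + (i - d) := by omega
    rw [e, h2]
  have hgcd : IsPer p (Nat.gcd q d) := gcd_per p (q + d) q d le_rfl hq1 (by omega) hqd hpq hpd
  have hdvd : q ∣ d := by
    have hg1 : 1 ≤ Nat.gcd q d := Nat.gcd_pos_of_pos_left d (by omega)
    have hgq : Nat.gcd q d ≤ q := Nat.le_of_dvd (by omega) (Nat.gcd_dvd_left q d)
    rcases eq_or_lt_of_le hgq with h | h
    · rw [← h]; exact Nat.gcd_dvd_right q d
    · obtain ⟨i, hi, hge, hne⟩ := hleast (Nat.gcd q d) hg1 h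
      exact absurd (hgcd i hi hge) hne
  obtain ⟨s, hs⟩ := hdvd
  intro r hr j
  have hj : (j : ℕ) < m := j.2
  have hrq : r * q ≤ d := by omega
  have hc1 : s * q = q * s := Nat.mul_comm s q
  have hc2 : r * q = q * r := Nat.mul_comm r q
  have hrs : r ≤ s := by
    by_contra h
    push_neg at h
    have h2 : q * (s + 1) ≤ q * r := Nat.mul_le_mul_left q h
    have h3 : q * (s + 1) = q * s + q := by ring
    omega
  have hje : t (k + r * q + (j : ℕ)) = p ⟨(j : ℕ), hj⟩ := by
    by_cases hcase : (j : ℕ) + r * q < m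
    · have h1 : t (k + ((j : ℕ) + r * q)) = p ⟨(j : ℕ) + r * q, hcase⟩ := hk ⟨_, hcase⟩
      have e : k + r * q + (j : ℕ) = k + ((j : ℕ) + r * q) := by omega
      rw [e, h1]
      exact iter_per p hpq r (j : ℕ) hcase
    · push_neg at hcase
      set i := r * q + (j : ℕ) - d with hidef
      have hid : d ≤ r * q + (j : ℕ) := by omega
      have him : i < m := by omega
      have h1 : t (l + i) = p ⟨i, him⟩ := hl ⟨i, him⟩
      have e : k + r * q + (j : ℕ) = l + i := by omega
      rw [e, h1]
      have hsr : (s - r) * q = s * q - r * q := Nat.sub_mul s r q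
      have hjq : i + (s - r) * q = (j : ℕ) := by omega
      calc p ⟨i, him⟩ = p ⟨i + (s - r) * q, by omega⟩ :=
            (iter_per p hpq (s - r) i (by omega)).symm
        _ = p ⟨(j : ℕ), hj⟩ := pcongr p _ _ hjq
  have : p ⟨(j : ℕ), hj⟩ = p j := congrArg p (Fin.eta j hj)
  rw [hje, this]
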